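/- For every even integer b ≥ 2, the expected maximum of a uniformly random ±1-step walk of length b starting at 0 satisfies E[X_b] = 2^{−b} · ((b + 1/2)·C(b, b/2) − 2^{b−1}); equivalently, 2·∑_{m=0}^{b} m·f(m,b) = (2b+1)·C(b, b/2) − 2^{b}. -/

import Mathlib

/-- The value of a ±1 step: `true` is a rightward step (+1), `false` a leftward step (−1). -/
def stepVal (x : Bool) : ℤ := if x then 1 else -1

/-- The position after `k` steps (partial sum `S_k`) of the walk with steps `ε`. -/
def partialSum {b : ℕ} (ε : Fin b → Bool) (k : ℕ) : ℤ :=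
  ∑ i : Fin b, if (i : ℕ) < k then stepVal (ε i) else 0

/-- The maximum attained position `max { S_k : 0 ≤ k ≤ b }` of the walk with steps `ε`,
started at 0. -/
def walkMax {b : ℕ} (ε : Fin b → Bool) : ℤ :=
  (Finset.range (b + 1)).sup' Finset.nonempty_range_add_one (partialSum ε)

/-- `f m b` : the number of ±1-step walks of length `b` starting at 0 whose maximum
attained position equals `m`. -/
def f (m : ℤ) (b : ℕ) : ℕ :=
  (Finset.univ.filter (fun ε : Fin b → Bool => walkMax ε = m)).card

/-! ### Basic partial sum lemmas -/

lemma partialSum_zero {b : ℕ} (ε : Fin b → Bool) : partialSum ε 0 = 0 := by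
  simp [partialSum]

lemma partialSum_succ {b : ℕ} (ε : Fin b → Bool) (k : ℕ) (hk : k < b) :
    partialSum ε (k + 1) = partialSum ε k + stepVal (ε ⟨k, hk⟩) := by
  unfold partialSum
  have : ∀ i : Fin b, (if (i:ℕ) < k + 1 then stepVal (ε i) else 0)
      = (if (i:ℕ) < k then stepVal (ε i) else 0) + (if (i:ℕ) = k then stepVal (ε i) else 0) := by
    intro i
    rcases lt_trichotomy (i:ℕ) k with h | h | h
    · simp [h, Nat.lt_succ_of_lt h, Nat.ne_of_lt h]
    · simp [h]
    · simp [Nat.ne_of_gt h, show ¬ (i:ℕ) < k + 1 from by omega, show ¬ (i:ℕ) < k from by omega]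
  rw [Finset.sum_congr rfl (fun i _ => this i), Finset.sum_add_distrib]
  congr 1
  rw [Finset.sum_eq_single (⟨k, hk⟩ : Fin b)]
  · simp
  · intro i _ hne
    have : (i:ℕ) ≠ k := fun h => hne (Fin.ext h)
    simp [this]
  · simp

lemma stepVal_abs (x : Bool) : stepVal x = 1 ∨ stepVal x = -1 := by
  cases x <;> simp [stepVal]

lemma stepVal_not (x : Bool) : stepVal (!x) = - stepVal x := by cases x <;> simp [stepVal]

/-! ### Discrete IVT and walkMax characterization -/

lemma ivt {b : ℕ} (ε : Fin b → Bool) (m : ℤ) (hm : 0 ≤ m) :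
    ∀ n, n ≤ b → m ≤ partialSum ε n → ∃ t ≤ n, partialSum ε t = m := by
  intro n
  induction n with
  | zero =>
    intro _ h
    refine ⟨0, le_refl 0, ?_⟩
    rw [partialSum_zero] at h ⊢
    omega
  | succ n ih =>
    intro hn h
    by_cases h' : m ≤ partialSum ε n
    · obtain ⟨t, ht, he⟩ := ih (by omega) h'
      exact ⟨t, by omega, he⟩
    · refine ⟨n + 1, le_refl _, ?_⟩
      push_neg at h'
      rw [partialSum_succ ε n (by omega)] at h ⊢
      rcases stepVal_abs (ε ⟨n, by omega⟩) with hs | hs <;> omega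

lemma walkMax_nonneg {b : ℕ} (ε : Fin b → Bool) : 0 ≤ walkMax ε := by
  have h0 : (0:ℕ) ∈ Finset.range (b+1) := Finset.mem_range.mpr (by omega)
  have := Finset.le_sup' (partialSum ε) h0
  rwa [partialSum_zero] at this

lemma partialSum_le {b : ℕ} (ε : Fin b → Bool) (k : ℕ) : partialSum ε k ≤ b := by
  unfold partialSum
  calc ∑ i : Fin b, (if (i:ℕ) < k then stepVal (ε i) else 0) ≤ ∑ _i : Fin b, (1:ℤ) := by
        apply Finset.sum_le_sum
        intro i _
        by_cases hi : (i:ℕ) < k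
        · simp only [hi, if_true]
          rcases stepVal_abs (ε i) with h | h <;> omega
        · simp [hi]
    _ = b := by simp

lemma walkMax_le {b : ℕ} (ε : Fin b → Bool) : walkMax ε ≤ b := by
  rw [walkMax, Finset.sup'_le_iff]
  intro k _
  exact partialSum_le ε k

lemma walkMax_ge_iff {b : ℕ} (ε : Fin b → Bool) (m : ℤ) (hm : 0 ≤ m) :
    m ≤ walkMax ε ↔ ∃ t ≤ b, partialSum ε t = m := by
  constructor
  · intro h
    rw [walkMax, Finset.le_sup'_iff] at h
    obtain ⟨n, hn, hle⟩ := h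
    rw [Finset.mem_range] at hn
    obtain ⟨t, ht, he⟩ := ivt ε m hm n (by omega) hle
    exact ⟨t, by omega, he⟩
  · rintro ⟨t, ht, he⟩
    calc m = partialSum ε t := he.symm
    _ ≤ walkMax ε := Finset.le_sup' _ (Finset.mem_range.mpr (by omega))

/-! ### Reflection -/

def hitsP {b : ℕ} (ε : Fin b → Bool) (m : ℤ) : Prop := ∃ t, t ≤ b ∧ partialSum ε t = m

instance {b : ℕ} (ε : Fin b → Bool) (m : ℤ) : Decidable (hitsP ε m) :=
  decidable_of_iff (∃ t : Fin (b+1), partialSum ε (t:ℕ) = m)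
    (by constructor
        · rintro ⟨t, ht⟩; exact ⟨t, Nat.lt_succ_iff.mp t.isLt, ht⟩
        · rintro ⟨t, ht, he⟩; exact ⟨⟨t, Nat.lt_succ_iff.mpr ht⟩, he⟩)

def reflect {b : ℕ} (m : ℤ) (ε : Fin b → Bool) : Fin b → Bool :=
  if h : hitsP ε m then
    fun i => if (i : ℕ) < Nat.find h then ε i else !(ε i)
  else ε

lemma partialSum_congr {b : ℕ} {ε ε' : Fin b → Bool} (k : ℕ)
    (h : ∀ i : Fin b, (i : ℕ) < k → ε i = ε' i) : partialSum ε k = partialSum ε' k := by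
  unfold partialSum
  apply Finset.sum_congr rfl
  intro i _
  by_cases hi : (i:ℕ) < k
  · simp [hi, h i hi]
  · simp [hi]

section refl
variable {b : ℕ} (ε : Fin b → Bool) (m : ℤ) (h : hitsP ε m)
include h

lemma reflect_eq_of_lt (i : Fin b) (hi : (i:ℕ) < Nat.find h) : reflect m ε i = ε i := by
  rw [reflect, dif_pos h, if_pos hi]

lemma reflect_eq_of_ge (i : Fin b) (hi : Nat.find h ≤ (i:ℕ)) : reflect m ε i = !(ε i) := by
  rw [reflect, dif_pos h, if_neg (by omega)]

lemma reflect_partialSum_le (k : ℕ) (hk : k ≤ Nat.find h) :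
    partialSum (reflect m ε) k = partialSum ε k :=
  partialSum_congr k (fun i hi => reflect_eq_of_lt ε m h i (by omega))

lemma reflect_partialSum_ge (k : ℕ) (hk : Nat.find h ≤ k) (hkb : k ≤ b) :
    partialSum (reflect m ε) k = 2 * m - partialSum ε k := by
  induction k, hk using Nat.le_induction with
  | base =>
    rw [reflect_partialSum_le ε m h _ le_rfl, (Nat.find_spec h).2]
    ring
  | succ k hk ih =>
    have hkb' : k < b := by omega
    rw [partialSum_succ _ k hkb', partialSum_succ _ k hkb',
      reflect_eq_of_ge ε m h ⟨k, hkb'⟩ (by simpa using hk), stepVal_not, ih (by omega)]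
    ring

lemma reflect_hits : hitsP (reflect m ε) m :=
  ⟨Nat.find h, (Nat.find_spec h).1, by
    rw [reflect_partialSum_le ε m h _ le_rfl]; exact (Nat.find_spec h).2⟩

lemma reflect_find_eq : Nat.find (reflect_hits ε m h) = Nat.find h := by
  apply le_antisymm
  · apply Nat.find_le
    exact ⟨(Nat.find_spec h).1, by
      rw [reflect_partialSum_le ε m h _ le_rfl]; exact (Nat.find_spec h).2⟩
  · have hs := Nat.find_spec (reflect_hits ε m h)
    set t := Nat.find (reflect_hits ε m h) with ht
    by_contra hlt
    push_neg at hlt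
    have heq : partialSum ε t = m := by
      rw [← reflect_partialSum_le ε m h t (by omega)]; exact hs.2
    have := Nat.find_le (h := h) ⟨hs.1, heq⟩
    omega

lemma reflect_reflect : reflect m (reflect m ε) = ε := by
  funext i
  by_cases hi : (i:ℕ) < Nat.find h
  · rw [reflect_eq_of_lt _ m (reflect_hits ε m h) i (by rw [reflect_find_eq]; exact hi),
      reflect_eq_of_lt ε m h i hi]
  · rw [reflect_eq_of_ge _ m (reflect_hits ε m h) i (by rw [reflect_find_eq ε m h]; omega),
      reflect_eq_of_ge ε m h i (by omega)]
    simp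

lemma reflect_endpoint : partialSum (reflect m ε) b = 2 * m - partialSum ε b :=
  reflect_partialSum_ge ε m h b (Nat.find_spec h).1 le_rfl

end refl

/-! ### Counting -/

open Finset

/-- Endpoints above the max imply hitting. -/
lemma hits_of_end_ge {b : ℕ} (ε : Fin b → Bool) (m : ℤ) (hm : 0 ≤ m)
    (h : m ≤ partialSum ε b) : hitsP ε m := by
  obtain ⟨t, ht, he⟩ := ivt ε m hm b le_rfl h
  exact ⟨t, ht, he⟩

/-- Reflection bijection on counts. -/
lemma card_reflect {b : ℕ} (m : ℤ) (hm : 0 ≤ m) :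
    (univ.filter (fun ε : Fin b → Bool => hitsP ε m ∧ partialSum ε b < m)).card
      = (univ.filter (fun ε : Fin b → Bool => m < partialSum ε b)).card := by
  apply Finset.card_bij' (fun ε _ => reflect m ε) (fun ε _ => reflect m ε)
  · intro ε hε
    rw [mem_filter] at hε ⊢
    obtain ⟨_, hhit, hend⟩ := hε
    refine ⟨mem_univ _, ?_⟩
    rw [reflect_endpoint ε m hhit]
    omega
  · intro ε hε
    rw [mem_filter] at hε ⊢
    obtain ⟨_, hend⟩ := hε
    have hhit : hitsP ε m := hits_of_end_ge ε m hm (le_of_lt hend)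
    refine ⟨mem_univ _, reflect_hits ε m hhit, ?_⟩
    rw [reflect_endpoint ε m hhit]
    omega
  · intro ε hε
    rw [mem_filter] at hε
    exact reflect_reflect ε m hε.2.1
  · intro ε hε
    rw [mem_filter] at hε
    exact reflect_reflect ε m (hits_of_end_ge ε m hm (le_of_lt hε.2))

/-- Key count: walks hitting `m` = endpoints ≥ m plus endpoints ≥ m+1. -/
lemma card_hits {b : ℕ} (m : ℤ) (hm : 0 ≤ m) :
    (univ.filter (fun ε : Fin b → Bool => hitsP ε m)).card
      = (univ.filter (fun ε : Fin b → Bool => m ≤ partialSum ε b)).card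
      + (univ.filter (fun ε : Fin b → Bool => m + 1 ≤ partialSum ε b)).card := by
  have hsplit := Finset.card_filter_add_card_filter_not
    (s := univ.filter (fun ε : Fin b → Bool => hitsP ε m))
    (fun ε : Fin b → Bool => m ≤ partialSum ε b)
  rw [Finset.filter_filter, Finset.filter_filter] at hsplit
  have e1 : univ.filter (fun ε : Fin b → Bool => hitsP ε m ∧ m ≤ partialSum ε b)
      = univ.filter (fun ε : Fin b → Bool => m ≤ partialSum ε b) := by
    apply Finset.filter_congr
    intro ε _
    constructor
    · rintro ⟨_, h2⟩; exact h2
    · intro h2; exact ⟨hits_of_end_ge ε m hm h2, h2⟩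
  have e2 : (univ.filter (fun ε : Fin b → Bool => hitsP ε m ∧ ¬ m ≤ partialSum ε b)).card
      = (univ.filter (fun ε : Fin b → Bool => m + 1 ≤ partialSum ε b)).card := by
    have : univ.filter (fun ε : Fin b → Bool => hitsP ε m ∧ ¬ m ≤ partialSum ε b)
        = univ.filter (fun ε : Fin b → Bool => hitsP ε m ∧ partialSum ε b < m) := by
      apply Finset.filter_congr
      intro ε _
      simp [not_le]
    have e3 : univ.filter (fun ε : Fin b → Bool => m < partialSum ε b)
        = univ.filter (fun ε : Fin b → Bool => m + 1 ≤ partialSum ε b) := by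
      apply Finset.filter_congr
      intro ε _
      exact Int.lt_iff_add_one_le
    rw [this, card_reflect m hm, e3]
  rw [e1, e2] at hsplit
  omega

def trueCount {b : ℕ} (ε : Fin b → Bool) : ℕ := (univ.filter (fun i => ε i)).card

lemma endpoint_eq {b : ℕ} (ε : Fin b → Bool) :
    partialSum ε b = 2 * (trueCount ε : ℤ) - b := by
  unfold partialSum trueCount
  have : ∀ i : Fin b, (if (i:ℕ) < b then stepVal (ε i) else 0)
      = 2 * (if ε i then (1:ℤ) else 0) - 1 := by
    intro i
    simp only [i.isLt, if_true]
    cases hεi : ε i <;> simp [stepVal]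
  rw [Finset.sum_congr rfl (fun i _ => this i), Finset.sum_sub_distrib, ← Finset.mul_sum,
    Finset.sum_boole, Finset.sum_const]
  simp [mul_comm]

lemma card_trueCount (b k : ℕ) :
    (univ.filter (fun ε : Fin b → Bool => trueCount ε = k)).card = b.choose k := by
  have hpc : b.choose k = ((univ : Finset (Fin b)).powersetCard k).card := by
    rw [Finset.card_powersetCard, card_univ, Fintype.card_fin]
  rw [hpc]
  refine Finset.card_bij' (fun ε _ => univ.filter (fun i => ε i))
    (fun s _ => fun i => decide (i ∈ s)) ?hi ?hj ?li ?ri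
  case hi =>
    intro ε hε
    rw [mem_filter] at hε
    rw [Finset.mem_powersetCard]
    exact ⟨Finset.subset_univ _, hε.2⟩
  case hj =>
    intro s hs
    rw [Finset.mem_powersetCard] at hs
    rw [mem_filter]
    refine ⟨mem_univ _, ?_⟩
    unfold trueCount
    have he : (univ.filter fun i => decide (i ∈ s) = true) = s := by
      ext i; simp
    show (univ.filter fun i => decide (i ∈ s) = true).card = k
    rw [he]
    exact hs.2
  case li =>
    intro ε hε
    funext i
    simp
  case ri =>
    intro s hs
    ext i
    simp

lemma card_end_ge (b : ℕ) (x : ℤ) :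
    (univ.filter (fun ε : Fin b → Bool => x ≤ partialSum ε b)).card
      = ∑ k ∈ range (b+1), if x ≤ 2 * (k:ℤ) - b then b.choose k else 0 := by
  rw [Finset.card_eq_sum_card_fiberwise (f := trueCount) (t := range (b+1))
    (fun ε _ => Finset.mem_range.mpr (Nat.lt_succ_of_le (by
      unfold trueCount
      exact le_trans (Finset.card_filter_le _ _) (by simp))))]
  apply Finset.sum_congr rfl
  intro k hk
  rw [Finset.filter_filter]
  by_cases hc : x ≤ 2 * (k:ℤ) - b
  · rw [if_pos hc, ← card_trueCount b k]
    congr 1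
    apply Finset.filter_congr
    intro ε _
    constructor
    · rintro ⟨_, h2⟩; exact h2
    · intro h2
      refine ⟨?_, h2⟩
      rw [endpoint_eq, h2]
      exact hc
  · rw [if_neg hc]
    simp only [Finset.card_eq_zero]
    apply Finset.filter_eq_empty_iff.mpr
    intro ε _
    rintro ⟨h1, h2⟩
    rw [endpoint_eq, h2] at h1
    exact hc h1

/-- indicator sum -/
lemma indSum (n : ℕ) (x : ℤ) (hx : x ≤ n) :
    ∑ m ∈ Finset.Icc 1 n, (if (m:ℤ) ≤ x then (1:ℤ) else 0) = max x 0 := by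
  induction n with
  | zero =>
    rw [Finset.Icc_eq_empty (by omega), Finset.sum_empty, max_eq_right (by exact_mod_cast hx)]
  | succ n ih =>
    by_cases h : x ≤ (n:ℤ)
    · rw [Finset.sum_Icc_succ_top (by omega), ih h, if_neg (by push_cast; omega),
        add_zero]
    · have hx1 : x = (n:ℤ) + 1 := by push_cast at hx; omega
      have hall : ∀ m ∈ Finset.Icc 1 (n+1), (if (m:ℤ) ≤ x then (1:ℤ) else 0) = 1 := by
        intro m hm
        rw [Finset.mem_Icc] at hm
        rw [if_pos (by push_cast; omega)]
      rw [Finset.sum_congr rfl hall, Finset.sum_const, Nat.card_Icc,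
        max_eq_left (by omega)]
      simp only [nsmul_eq_mul, mul_one]
      omega

lemma N1 (n : ℕ) :
    2 * ∑ k ∈ Ico (n+1) (2*n+1), (2*n).choose k + (2*n).choose n = 2^(2*n) := by
  have htot : ∑ k ∈ range (2*n+1), (2*n).choose k = 2^(2*n) := Nat.sum_range_choose (2*n)
  have hsplit : ∑ k ∈ range (n+1), (2*n).choose k + ∑ k ∈ Ico (n+1) (2*n+1), (2*n).choose k
      = 2^(2*n) := by
    rw [← htot, range_eq_Ico, Finset.sum_Ico_consecutive _ (by omega) (by omega), ← range_eq_Ico]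
  have hB : ∑ k ∈ Ico (n+1) (2*n+1), (2*n).choose k = ∑ k ∈ range n, (2*n).choose k := by
    rw [Finset.sum_Ico_eq_sum_range]
    have h1 : ∀ i ∈ range n, (2*n).choose (n+1+i) = (2*n).choose (n-1-i) := by
      intro i hi
      rw [mem_range] at hi
      rw [← Nat.choose_symm (by omega : n+1+i ≤ 2*n)]
      congr 1
      omega
    rw [show 2*n+1 - (n+1) = n by omega, Finset.sum_congr rfl h1,
      Finset.sum_range_reflect (fun k => (2*n).choose k) n]
  have hA : ∑ k ∈ range (n+1), (2*n).choose k
      = ∑ k ∈ range n, (2*n).choose k + (2*n).choose n := Finset.sum_range_succ _ _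
  omega

lemma N2 (n : ℕ) (hn : 1 ≤ n) :
    2 * ∑ j ∈ Ico n (2*n), (2*n-1).choose j = 2^(2*n-1) := by
  have htot : ∑ k ∈ range (2*n), (2*n-1).choose k = 2^(2*n-1) := by
    have := Nat.sum_range_choose (2*n-1)
    rw [show 2*n-1+1 = 2*n by omega] at this
    exact this
  have hsplit : ∑ k ∈ range n, (2*n-1).choose k + ∑ k ∈ Ico n (2*n), (2*n-1).choose k
      = 2^(2*n-1) := by
    rw [← htot, range_eq_Ico, Finset.sum_Ico_consecutive _ (by omega) (by omega), ← range_eq_Ico]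
  have hB : ∑ k ∈ Ico n (2*n), (2*n-1).choose k = ∑ k ∈ range n, (2*n-1).choose k := by
    rw [Finset.sum_Ico_eq_sum_range]
    have h1 : ∀ i ∈ range (2*n - n), (2*n-1).choose (n+i) = (2*n-1).choose (n-1-i) := by
      intro i hi
      rw [mem_range] at hi
      rw [← Nat.choose_symm (by omega : n+i ≤ 2*n-1)]
      congr 1
      omega
    rw [Finset.sum_congr rfl h1, show 2*n - n = n by omega,
      Finset.sum_range_reflect (fun k => (2*n-1).choose k) n]
  omega

lemma N3 (n : ℕ) (hn : 1 ≤ n) :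
    ∑ k ∈ Ico (n+1) (2*n+1), k * (2*n).choose k
      = 2*n * ∑ j ∈ Ico n (2*n), (2*n-1).choose j := by
  have hterm : ∀ k ∈ Ico (n+1) (2*n+1), k * (2*n).choose k = 2*n * (2*n-1).choose (k-1) := by
    intro k hk
    rw [mem_Ico] at hk
    have := Nat.add_one_mul_choose_eq (2*n-1) (k-1)
    rw [show 2*n-1+1 = 2*n by omega, show k-1+1 = k by omega] at this
    rw [this, mul_comm]
  rw [Finset.sum_congr rfl hterm, Finset.mul_sum, Finset.sum_Ico_eq_sum_range,
    Finset.sum_Ico_eq_sum_range]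
  rw [show 2*n+1-(n+1) = n by omega, show 2*n - n = n by omega]
  apply Finset.sum_congr rfl
  intro i _
  congr 2
  omega

lemma binom (n : ℕ) (hn : 1 ≤ n) :
    2 * ∑ k ∈ range (2*n+1), ((2*n).choose k : ℤ)
        * (max (2*(k:ℤ)-2*(n:ℤ)) 0 + max (2*(k:ℤ)-2*(n:ℤ)-1) 0)
      = (2*(2*(n:ℤ))+1) * ((2*n).choose n : ℤ) - 2^(2*n) := by
  have h0 : ∀ k ∈ Ico 0 (n+1), ((2*n).choose k : ℤ)
      * (max (2*(k:ℤ)-2*(n:ℤ)) 0 + max (2*(k:ℤ)-2*(n:ℤ)-1) 0) = 0 := by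
    intro k hk
    rw [mem_Ico] at hk
    have hk' : (k:ℤ) ≤ n := by exact_mod_cast Nat.lt_succ_iff.mp hk.2
    rw [max_eq_right (by omega), max_eq_right (by omega)]
    ring
  have h1 : ∀ k ∈ Ico (n+1) (2*n+1), ((2*n).choose k : ℤ)
      * (max (2*(k:ℤ)-2*(n:ℤ)) 0 + max (2*(k:ℤ)-2*(n:ℤ)-1) 0)
      = 4*(k:ℤ)*((2*n).choose k : ℤ) - (4*(n:ℤ)+1)*((2*n).choose k : ℤ) := by
    intro k hk
    rw [mem_Ico] at hk
    have hk' : (n:ℤ) + 1 ≤ (k:ℤ) := by exact_mod_cast hk.1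
    rw [max_eq_left (by omega), max_eq_left (by omega)]
    ring
  rw [range_eq_Ico, ← Finset.sum_Ico_consecutive _ (show 0 ≤ n+1 by omega)
      (show n+1 ≤ 2*n+1 by omega),
    Finset.sum_congr rfl h0, Finset.sum_congr rfl h1, Finset.sum_const_zero, zero_add,
    Finset.sum_sub_distrib]
  have e1 := N1 n
  have e2 := N2 n hn
  have e3 := N3 n hn
  zify at e1 e2 e3
  have hpow : (2:ℤ)^(2*n) = 2 * 2^(2*n-1) := by
    rw [← pow_succ']
    congr 1
    omega
  have ha : ∑ x ∈ Ico (n+1) (2*n+1), 4*(x:ℤ)*((2*n).choose x:ℤ)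
      = 4 * ∑ x ∈ Ico (n+1) (2*n+1), (x:ℤ)*((2*n).choose x:ℤ) := by
    rw [Finset.mul_sum]
    exact Finset.sum_congr rfl (fun x _ => by ring)
  have hb : ∑ x ∈ Ico (n+1) (2*n+1), (4*(n:ℤ)+1)*((2*n).choose x:ℤ)
      = (4*(n:ℤ)+1) * ∑ x ∈ Ico (n+1) (2*n+1), ((2*n).choose x:ℤ) :=
    (Finset.mul_sum _ _ _).symm
  rw [ha, hb, e3]
  linear_combination 8*(n:ℤ)*e2 - (4*(n:ℤ)+1)*e1 - 4*(n:ℤ)*hpow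

lemma sum_mf (b : ℕ) :
    ∑ m ∈ range (b+1), (m:ℤ) * f m b = ∑ ε : Fin b → Bool, walkMax ε := by
  rw [← Finset.sum_fiberwise_of_maps_to (g := fun ε : Fin b → Bool => (walkMax ε).toNat)
    (t := range (b+1)) (fun ε _ => Finset.mem_range.mpr (by
      have h1 := walkMax_nonneg ε
      have h2 := walkMax_le ε
      show (walkMax ε).toNat < b + 1
      omega)) (fun ε => walkMax ε)]
  apply Finset.sum_congr rfl
  intro m hm
  have hfib : ∀ ε ∈ univ.filter (fun ε : Fin b → Bool => (walkMax ε).toNat = m),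
      walkMax ε = (m:ℤ) := by
    intro ε hε
    rw [mem_filter] at hε
    have := walkMax_nonneg ε
    omega
  rw [Finset.sum_congr rfl hfib, Finset.sum_const]
  have hfe : univ.filter (fun ε : Fin b → Bool => (walkMax ε).toNat = m)
      = univ.filter (fun ε : Fin b → Bool => walkMax ε = (m:ℤ)) := by
    apply Finset.filter_congr
    intro ε _
    have := walkMax_nonneg ε
    constructor
    · intro h; omega
    · intro h; omega
  rw [hfe]
  show (m:ℤ) * (f (m:ℤ) b : ℤ) = _
  rw [f]
  push_cast
  ring

lemma sum_walkMax (b : ℕ) :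
    (∑ ε : Fin b → Bool, walkMax ε)
      = ∑ m ∈ Finset.Icc 1 b,
          ((univ.filter (fun ε : Fin b → Bool => hitsP ε (m:ℤ))).card : ℤ) := by
  have hpt : ∀ ε ∈ (univ : Finset (Fin b → Bool)), walkMax ε
      = ∑ m ∈ Finset.Icc 1 b, (if (m:ℤ) ≤ walkMax ε then (1:ℤ) else 0) := by
    intro ε _
    rw [indSum b (walkMax ε) (walkMax_le ε), max_eq_left (walkMax_nonneg ε)]
  rw [Finset.sum_congr rfl hpt, Finset.sum_comm]
  apply Finset.sum_congr rfl
  intro m hm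
  rw [Finset.mem_Icc] at hm
  rw [Finset.sum_boole]
  congr 1
  congr 1
  apply Finset.filter_congr
  intro ε _
  rw [walkMax_ge_iff ε m (by exact_mod_cast Int.ofNat_nonneg m)]
  constructor
  · rintro ⟨t, ht, he⟩; exact ⟨t, ht, he⟩
  · rintro ⟨t, ht, he⟩; exact ⟨t, ht, he⟩

lemma total_eq (b : ℕ) :
    ∑ m ∈ Finset.Icc 1 b,
        ((univ.filter (fun ε : Fin b → Bool => hitsP ε (m:ℤ))).card : ℤ)
      = ∑ k ∈ range (b+1), (b.choose k : ℤ)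
          * (max (2*(k:ℤ)-(b:ℤ)) 0 + max (2*(k:ℤ)-(b:ℤ)-1) 0) := by
  have step1 : ∀ m ∈ Finset.Icc 1 b,
      ((univ.filter (fun ε : Fin b → Bool => hitsP ε (m:ℤ))).card : ℤ)
      = ∑ k ∈ range (b+1), ((if (m:ℤ) ≤ 2*(k:ℤ)-(b:ℤ) then (b.choose k:ℤ) else 0)
          + (if (m:ℤ)+1 ≤ 2*(k:ℤ)-(b:ℤ) then (b.choose k:ℤ) else 0)) := by
    intro m hm
    rw [Finset.mem_Icc] at hm
    rw [card_hits (m:ℤ) (by exact_mod_cast Int.ofNat_nonneg m), card_end_ge b (m:ℤ),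
      card_end_ge b ((m:ℤ)+1), Finset.sum_add_distrib]
    push_cast [apply_ite (fun x : ℕ => (x:ℤ))]
    ring
  rw [Finset.sum_congr rfl step1, Finset.sum_comm]
  apply Finset.sum_congr rfl
  intro k hk
  rw [Finset.mem_range] at hk
  have hkb : (k:ℤ) ≤ b := by exact_mod_cast Nat.lt_succ_iff.mp hk
  have hsum1 : ∑ m ∈ Finset.Icc 1 b, (if (m:ℤ) ≤ 2*(k:ℤ)-(b:ℤ) then (b.choose k:ℤ) else 0)
      = (b.choose k:ℤ) * max (2*(k:ℤ)-(b:ℤ)) 0 := by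
    rw [← indSum b (2*(k:ℤ)-(b:ℤ)) (by omega), Finset.mul_sum]
    exact Finset.sum_congr rfl (fun m _ => by rw [mul_ite, mul_one, mul_zero])
  have hsum2 : ∑ m ∈ Finset.Icc 1 b, (if (m:ℤ)+1 ≤ 2*(k:ℤ)-(b:ℤ) then (b.choose k:ℤ) else 0)
      = (b.choose k:ℤ) * max (2*(k:ℤ)-(b:ℤ)-1) 0 := by
    rw [← indSum b (2*(k:ℤ)-(b:ℤ)-1) (by omega), Finset.mul_sum]
    refine Finset.sum_congr rfl (fun m _ => ?_)
    rw [mul_ite, mul_one, mul_zero]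
    congr 1
    simp only [eq_iff_iff]
    omega
  rw [Finset.sum_add_distrib, hsum1, hsum2]
  ring

/-- Proposition 3 (even case): for even `b ≥ 2`, the expected maximum of a uniformly
random ±1-step walk of length `b` is `2^{−b}·((b + 1/2)·C(b, b/2) − 2^{b−1})`;
equivalently, `2·∑_{m=0}^{b} m·f(m,b) = (2b+1)·C(b, b/2) − 2^b`. -/
theorem expected_max_even (b : ℕ) (hb : 2 ≤ b) (hbe : Even b) :
    (∑ m ∈ Finset.range (b + 1), (m : ℚ) * (f m b : ℚ)) / 2 ^ b
      = (((b : ℚ) + 1 / 2) * (Nat.choose b (b / 2) : ℚ) - 2 ^ (b - 1)) / 2 ^ b ∧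
    2 * ∑ m ∈ Finset.range (b + 1), (m : ℤ) * (f m b : ℤ)
      = (2 * (b : ℤ) + 1) * (Nat.choose b (b / 2) : ℤ) - 2 ^ b := by
  obtain ⟨n, hn⟩ := hbe
  have hb2 : b = 2 * n := by omega
  have hn1 : 1 ≤ n := by omega
  have part2 : 2 * ∑ m ∈ Finset.range (b + 1), (m : ℤ) * (f m b : ℤ)
      = (2 * (b : ℤ) + 1) * (Nat.choose b (b / 2) : ℤ) - 2 ^ b := by
    rw [sum_mf b, sum_walkMax b, total_eq b]
    subst hb2
    rw [show 2 * n / 2 = n by omega]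
    have hB := binom n hn1
    push_cast at hB ⊢
    linarith [hB]
  refine ⟨?_, part2⟩
  have hc : (2:ℚ) * ∑ m ∈ Finset.range (b + 1), (m : ℚ) * (f m b : ℚ)
      = (2 * (b : ℚ) + 1) * (Nat.choose b (b / 2) : ℚ) - 2 ^ b := by
    exact_mod_cast part2
  have hpow : (2:ℚ) ^ b = 2 * 2 ^ (b - 1) := by
    rw [← pow_succ']
    congr 1
    omega
  have hnum : (∑ m ∈ Finset.range (b + 1), (m : ℚ) * (f m b : ℚ))
      = ((b : ℚ) + 1 / 2) * (Nat.choose b (b / 2) : ℚ) - 2 ^ (b - 1) := by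
    linarith [hc]
  rw [hnum]
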